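/- Let b, n, d be natural numbers with n < b. Let δ, L, U : Fin b → Fin d → ℝ be families of per-sample gradient vectors and their element-wise bounds, satisfying L i j ≤ δ i j ≤ U i j for all i : Fin b and j : Fin d. Then for every subset S ⊆ Fin b with |S| ≥ b − n and S nonempty, and every coordinate j : Fin d, the batch-average gradient satisfies (1/(b−n)) · SEMin_{b−n}{L i j}_{i=1}^{b} ≤ (1/|S|) · ∑_{i ∈ S} δ i j ≤ (1/(b−n)) · SEMax_{b−n}{U i j}_{i=1}^{b}. (Theorem: descent direction bounds under removal of up to n training samples.) -/

import Mathlib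

/-- `SEMin a k`: the sum of the `k` smallest elements of the family `a`
(counted with multiplicity). -/
noncomputable def SEMin {b : ℕ} (a : Fin b → ℝ) (k : ℕ) : ℝ :=
  (((List.ofFn a).mergeSort (· ≤ ·)).take k).sum

/-- `SEMax a k`: the sum of the `k` largest elements of the family `a`
(counted with multiplicity). -/
noncomputable def SEMax {b : ℕ} (a : Fin b → ℝ) (k : ℕ) : ℝ :=
  (((List.ofFn a).mergeSort (· ≥ ·)).take k).sum

/- Auxiliary lemmas -/

private lemma take_sum_le_sublist_sum : ∀ {t l : List ℝ}, List.Sublist t l →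
    l.Pairwise (· ≤ ·) → (l.take t.length).sum ≤ t.sum := by
  intro t l h
  induction h with
  | slnil => simp
  | cons a h ih =>
    rename_i t l
    intro hs
    have h1 : (List.take t.length (a :: l)).sum ≤ (l.take t.length).sum := by
      cases t with
      | nil => simp
      | cons x xs =>
        have hm : xs.length < l.length := by
          have := h.length_le; simpa using this
        rw [List.length_cons, List.take_succ_cons, List.sum_cons,
          List.sum_take_succ l xs.length hm]
        have : a ≤ l[xs.length] := (List.pairwise_cons.mp hs).1 _ (List.getElem_mem hm)
        linarith
    exact h1.trans (ih hs.of_cons)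
  | cons_cons a h ih =>
    rename_i t l
    intro hs
    simp only [List.length_cons, List.take_succ_cons, List.sum_cons]
    have := ih hs.of_cons
    linarith

private lemma take_avg_mono (l : List ℝ) (hl : l.Pairwise (· ≤ ·)) :
    ∀ m, m ≤ l.length → ∀ k, k ≤ m →
    (l.take k).sum * m ≤ (l.take m).sum * k := by
  have hpw := List.pairwise_iff_getElem.mp hl
  intro m
  induction m with
  | zero => intro _ k hk; interval_cases k; simp
  | succ m ih =>
    intro hm k hk
    rcases Nat.lt_or_ge k (m+1) with hlt | hge
    · have hk' : k ≤ m := Nat.lt_succ_iff.mp hlt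
      have hmm : m < l.length := hm
      have ih' := ih (le_of_lt hm) k hk'
      rw [List.sum_take_succ l m hmm]
      have hbound : (l.take k).sum ≤ k * l[m] := by
        have hele : ∀ x ∈ l.take k, x ≤ l[m] := by
          intro x hx
          obtain ⟨i, hi, hxi⟩ := List.getElem_of_mem hx
          have hi' : i < k := (by simpa using hi : i < k ∧ i < l.length).1
          rw [List.getElem_take] at hxi
          subst hxi
          rcases Nat.lt_or_ge i m with him | him
          · exact hpw i m (him.trans hmm) hmm him
          · have : i = m := le_antisymm (Nat.lt_succ_iff.mp (Nat.lt_of_lt_of_le hi' hk)) him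
            subst this; exact le_refl _
        have := List.sum_le_card_nsmul (l.take k) l[m] hele
        have hlk : (l.take k).length = k :=
          List.length_take_of_le (Nat.le_trans hk' (le_of_lt hmm))
        rw [hlk, nsmul_eq_mul] at this
        exact this
      push_cast
      nlinarith [hbound, ih']
    · have : k = m + 1 := le_antisymm hk hge
      subst this; simp

private lemma sorted_mergeSort_le {b : ℕ} (a : Fin b → ℝ) :
    ((List.ofFn a).mergeSort (· ≤ ·)).Pairwise (· ≤ ·) := by
  have := List.pairwise_mergeSort (le := fun x y : ℝ => decide (x ≤ y))
    (fun x y z hxy hyz => by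
      simp only [decide_eq_true_eq] at *; exact hxy.trans hyz)
    (fun x y => by
      simp only [Bool.or_eq_true, decide_eq_true_eq]; exact le_total x y)
    (List.ofFn a)
  exact this.imp (fun h => by simpa using h)

/-- Key lemma: lower bound on the average. -/
private lemma avg_lower_bound (b n : ℕ) (hn : n < b) (a v : Fin b → ℝ)
    (hav : ∀ i, a i ≤ v i)
    (S : Finset (Fin b)) (hS : b - n ≤ S.card) (hSne : S.Nonempty) :
    (1 / ((b : ℝ) - n)) * SEMin a (b - n) ≤ (1 / (S.card : ℝ)) * ∑ i ∈ S, v i := by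
  set k := b - n with hk
  set l := (List.ofFn a).mergeSort (· ≤ ·) with hldef
  have hsorted : l.Pairwise (· ≤ ·) := sorted_mergeSort_le a
  -- the list of values of `a` over `S` is a subpermutation of `l`
  set t : List ℝ := S.toList.map a with htdef
  have htlen : t.length = S.card := by simp [htdef, Finset.length_toList]
  have hsub : t.Subperm l := by
    rw [← Multiset.coe_le]
    have h1 : (↑t : Multiset ℝ) = Multiset.map a S.val := by
      rw [htdef, ← Finset.coe_toList S, Multiset.map_coe]
    have h2 : (↑l : Multiset ℝ) = Multiset.map a (Finset.univ : Finset (Fin b)).val := by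
      have hperm : l.Perm (List.ofFn a) := List.mergeSort_perm _ _
      rw [Multiset.coe_eq_coe.mpr hperm, List.ofFn_eq_map]
      rfl
    rw [h1, h2]
    exact Multiset.map_le_map (Finset.val_le_iff.mpr (Finset.subset_univ S))
  obtain ⟨t', hperm', hsubl⟩ := hsub
  have hlen' : t'.length = S.card := by rw [hperm'.length_eq, htlen]
  have hsum' : t'.sum = ∑ i ∈ S, a i := by
    rw [hperm'.sum_eq, htdef, Finset.sum_map_toList]
  -- sum of the S.card smallest ≤ sum over S of a
  have hstep1 : (l.take S.card).sum ≤ ∑ i ∈ S, a i := by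
    rw [← hsum', ← hlen']
    exact take_sum_le_sublist_sum hsubl hsorted
  -- average monotonicity
  have hcardle : S.card ≤ l.length := by
    rw [← hlen']; exact hsubl.length_le
  have hstep2 : (l.take k).sum * S.card ≤ (l.take S.card).sum * k :=
    take_avg_mono l hsorted S.card hcardle k hS
  have hstep3 : (∑ i ∈ S, a i) ≤ ∑ i ∈ S, v i :=
    Finset.sum_le_sum (fun i _ => hav i)
  -- put it together
  have hkpos : 0 < k := Nat.sub_pos_of_lt hn
  have hscardpos : 0 < S.card := Finset.card_pos.mpr hSne
  have hkR : ((b : ℝ) - n) = (k : ℝ) := by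
    rw [hk, Nat.cast_sub hn.le]
  rw [hkR, one_div_mul_eq_div, one_div_mul_eq_div,
    div_le_div_iff₀ (by exact_mod_cast hkpos) (by exact_mod_cast hscardpos)]
  have : (l.take k).sum * S.card ≤ (∑ i ∈ S, v i) * k := by
    calc (l.take k).sum * S.card ≤ (l.take S.card).sum * k := hstep2
      _ ≤ (∑ i ∈ S, a i) * k := by
          apply mul_le_mul_of_nonneg_right hstep1 (by positivity)
      _ ≤ (∑ i ∈ S, v i) * k := by
          apply mul_le_mul_of_nonneg_right hstep3 (by positivity)
  simpa [SEMin] using this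

private lemma semax_eq_neg_semin {b : ℕ} (a : Fin b → ℝ) (k : ℕ) :
    SEMax a k = - SEMin (fun i => -(a i)) k := by
  set l₁ := (List.ofFn a).mergeSort (· ≥ ·) with h1
  set l₂ := (List.ofFn (fun i => -(a i))).mergeSort (· ≤ ·) with h2
  have hsorted₂ : l₂.Pairwise (· ≤ ·) := sorted_mergeSort_le _
  have hkey : l₁ = l₂.map (fun x => -x) := by
    refine (fun hp h1 h2 => List.Perm.eq_of_pairwise (le := fun x y : ℝ => x ≥ y)
      (fun _ _ _ _ hxy hyx => le_antisymm hyx hxy) h1 h2 hp) ?_ ?_ ?_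
    · -- permutation
      have p1 : l₁.Perm (List.ofFn a) := List.mergeSort_perm _ _
      have p2 : l₂.Perm (List.ofFn (fun i => -(a i))) := List.mergeSort_perm _ _
      have p3 : (l₂.map (fun x => -x)).Perm
          ((List.ofFn (fun i => -(a i))).map (fun x => -x)) := p2.map _
      have : (List.ofFn (fun i => -(a i))).map (fun x => -x) = List.ofFn a := by
        rw [List.map_ofFn]; congr 1; funext i; simp
      rw [this] at p3
      exact p1.trans p3.symm
    · -- l₁ sorted wrt ≥
      have := List.pairwise_mergeSort (le := fun x y : ℝ => decide (x ≥ y))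
        (fun x y z hxy hyz => by
          simp only [decide_eq_true_eq] at *; exact le_trans hyz hxy)
        (fun x y => by
          simp only [Bool.or_eq_true, decide_eq_true_eq]; exact le_total y x)
        (List.ofFn a)
      exact this.imp (fun h => by simpa using h)
    · -- map neg of l₂ sorted wrt ≥
      rw [List.pairwise_map]
      exact hsorted₂.imp (fun h => by simpa using h)
  have hmapsum : ∀ m : List ℝ, (m.map (fun x => -x)).sum = -m.sum := by
    intro m
    induction m with
    | nil => simp
    | cons x xs ih => simp [ih]; ring
  rw [SEMax, SEMin, ← h1, ← h2, hkey, ← List.map_take, hmapsum]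

/-- Descent direction bounds under removal of up to `n` of the `b` training samples. -/
theorem descent_direction_bounds_removal
    (b n d : ℕ) (hn : n < b)
    (δ L U : Fin b → Fin d → ℝ)
    (hL : ∀ i j, L i j ≤ δ i j) (hU : ∀ i j, δ i j ≤ U i j)
    (S : Finset (Fin b)) (hS : b - n ≤ S.card) (hSne : S.Nonempty) (j : Fin d) :
    (1 / ((b : ℝ) - n)) * SEMin (fun i => L i j) (b - n) ≤
        (1 / (S.card : ℝ)) * ∑ i ∈ S, δ i j ∧
      (1 / (S.card : ℝ)) * ∑ i ∈ S, δ i j ≤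
        (1 / ((b : ℝ) - n)) * SEMax (fun i => U i j) (b - n) := by
  constructor
  · exact avg_lower_bound b n hn (fun i => L i j) (fun i => δ i j)
      (fun i => hL i j) S hS hSne
  · have h := avg_lower_bound b n hn (fun i => -(U i j)) (fun i => -(δ i j))
      (fun i => neg_le_neg (hU i j)) S hS hSne
    rw [semax_eq_neg_semin]
    rw [Finset.sum_neg_distrib] at h
    have hb : (0:ℝ) < (b:ℝ) - n := by
      have : (n:ℝ) < b := by exact_mod_cast hn
      linarith
    have hs : (0:ℝ) < (S.card : ℝ) := by
      exact_mod_cast Finset.card_pos.mpr hSne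
    nlinarith [h, mul_pos (one_div_pos.mpr hb) (one_div_pos.mpr hs)]
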